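/- For every k ≥ 4 and every n ≥ 2, every n-vertex tree that is a max-swap equilibrium for pessimistic players with k-local information has diameter at most three, and PoA_MAX(n, n−1, k) ≤ 3/2. -/

import Mathlib

set_option linter.unusedSectionVars false
set_option maxHeartbeats 1000000


open SimpleGraph

namespace SwapGame

/-- The set of vertices within distance `k` of `u` in `G` (the `k`-neighborhood). -/
def ball {V : Type} (G : SimpleGraph V) (u : V) (k : ℕ) : Set V :=
  {v | G.edist u v ≤ (k : ℕ∞)}

/-- The graph obtained from `G` by the edge swap `(v, w)` at `u`:
remove the edge `{u, v}` and add the edge `{u, w}`. -/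
def swapGraph {V : Type} (G : SimpleGraph V) (u v w : V) : SimpleGraph V :=
  SimpleGraph.fromEdgeSet ((G.edgeSet \ {s(u, v)}) ∪ {s(u, w)})

/-- The edge swap `(v, w)` at `u` is a legal move for a player with `k`-local information:
`v` is a neighbor of `u` and `w` is a non-neighbor (other than `u`) within distance `k`. -/
def ValidSwap {V : Type} (G : SimpleGraph V) (k : ℕ) (u v w : V) : Prop :=
  G.Adj u v ∧ G.edist u w ≤ (k : ℕ∞) ∧ ¬ G.Adj u w ∧ w ≠ u

/-- `H` (a graph on `W`, with `ι` identifying the view inside `H`) is a finite connected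
graph compatible with `u`'s `k`-local view in `G`. -/
def Compatible {V : Type} (G : SimpleGraph V) (k : ℕ) (u : V)
    {W : Type} (H : SimpleGraph W) (ι : V → W) : Prop :=
  Finite W ∧ H.Connected ∧ Set.InjOn ι (ball G u k) ∧
  {x : W | H.edist (ι u) x ≤ (k : ℕ∞)} = ι '' ball G u k ∧
  ∀ a ∈ ball G u k, ∀ b ∈ ball G u k, (H.Adj (ι a) (ι b) ↔ G.Adj a b)

/-- SUM-cost of player `u` in `H` (`⊤` when `H` is disconnected). -/
noncomputable def cSum {W : Type} (H : SimpleGraph W) (u : W) : ℕ∞ :=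
  ∑' v, H.edist u v

/-- MAX-cost (eccentricity) of player `u` in `H` (`⊤` when `H` is disconnected). -/
noncomputable def cMax {W : Type} (H : SimpleGraph W) (u : W) : ℕ∞ :=
  ⨆ v, H.edist u v

/-- A pessimistic player `u` with `k`-local information is unhappy in `G` w.r.t. the
SUM-cost via the edge swap `(v, w)`: the swap strictly decreases `u`'s cost in every
compatible global graph. -/
def UnhappySumVia {V : Type} (G : SimpleGraph V) (k : ℕ) (u v w : V) : Prop :=
  ValidSwap G k u v w ∧
  ∀ (W : Type) (H : SimpleGraph W) (ι : V → W), Compatible G k u H ι →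
    cSum (swapGraph H (ι u) (ι v) (ι w)) (ι u) < cSum H (ι u)

/-- Pessimistic unhappiness w.r.t. the MAX-cost via the edge swap `(v, w)`. -/
def UnhappyMaxVia {V : Type} (G : SimpleGraph V) (k : ℕ) (u v w : V) : Prop :=
  ValidSwap G k u v w ∧
  ∀ (W : Type) (H : SimpleGraph W) (ι : V → W), Compatible G k u H ι →
    cMax (swapGraph H (ι u) (ι v) (ι w)) (ι u) < cMax H (ι u)

/-- Weakly pessimistic unhappiness w.r.t. the SUM-cost via the edge swap `(v, w)`:
the swap does not increase `u`'s cost in any compatible global graph. -/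
def WeakUnhappySumVia {V : Type} (G : SimpleGraph V) (k : ℕ) (u v w : V) : Prop :=
  ValidSwap G k u v w ∧
  ∀ (W : Type) (H : SimpleGraph W) (ι : V → W), Compatible G k u H ι →
    cSum (swapGraph H (ι u) (ι v) (ι w)) (ι u) ≤ cSum H (ι u)

/-- Weakly pessimistic unhappiness w.r.t. the MAX-cost via the edge swap `(v, w)`. -/
def WeakUnhappyMaxVia {V : Type} (G : SimpleGraph V) (k : ℕ) (u v w : V) : Prop :=
  ValidSwap G k u v w ∧
  ∀ (W : Type) (H : SimpleGraph W) (ι : V → W), Compatible G k u H ι →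
    cMax (swapGraph H (ι u) (ι v) (ι w)) (ι u) ≤ cMax H (ι u)

/-- Optimistic unhappiness w.r.t. the SUM-cost via the edge swap `(v, w)`:
the swap strictly decreases `u`'s cost in some compatible global graph
(with the swapped graph connected). -/
def OptUnhappySumVia {V : Type} (G : SimpleGraph V) (k : ℕ) (u v w : V) : Prop :=
  ValidSwap G k u v w ∧
  ∃ (W : Type) (H : SimpleGraph W) (ι : V → W), Compatible G k u H ι ∧
    (swapGraph H (ι u) (ι v) (ι w)).Connected ∧
    cSum (swapGraph H (ι u) (ι v) (ι w)) (ι u) < cSum H (ι u)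

/-- Optimistic unhappiness w.r.t. the MAX-cost via the edge swap `(v, w)`. -/
def OptUnhappyMaxVia {V : Type} (G : SimpleGraph V) (k : ℕ) (u v w : V) : Prop :=
  ValidSwap G k u v w ∧
  ∃ (W : Type) (H : SimpleGraph W) (ι : V → W), Compatible G k u H ι ∧
    (swapGraph H (ι u) (ι v) (ι w)).Connected ∧
    cMax (swapGraph H (ι u) (ι v) (ι w)) (ι u) < cMax H (ι u)

/-- Sum-swap equilibrium for pessimistic players with `k`-local information. -/
def SumEquilibrium {V : Type} (G : SimpleGraph V) (k : ℕ) : Prop :=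
  ∀ u : V, ¬ ∃ v w, UnhappySumVia G k u v w

/-- Max-swap equilibrium for pessimistic players with `k`-local information. -/
def MaxEquilibrium {V : Type} (G : SimpleGraph V) (k : ℕ) : Prop :=
  ∀ u : V, ¬ ∃ v w, UnhappyMaxVia G k u v w

/-- Sum-swap equilibrium for weakly pessimistic players with `k`-local information. -/
def WeakSumEquilibrium {V : Type} (G : SimpleGraph V) (k : ℕ) : Prop :=
  ∀ u : V, ¬ ∃ v w, WeakUnhappySumVia G k u v w

/-- Max-swap equilibrium for weakly pessimistic players with `k`-local information. -/
def WeakMaxEquilibrium {V : Type} (G : SimpleGraph V) (k : ℕ) : Prop :=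
  ∀ u : V, ¬ ∃ v w, WeakUnhappyMaxVia G k u v w

/-- Sum-swap equilibrium for optimistic players with `k`-local information. -/
def OptSumEquilibrium {V : Type} (G : SimpleGraph V) (k : ℕ) : Prop :=
  ∀ u : V, ¬ ∃ v w, OptUnhappySumVia G k u v w

/-- Max-swap equilibrium for optimistic players with `k`-local information. -/
def OptMaxEquilibrium {V : Type} (G : SimpleGraph V) (k : ℕ) : Prop :=
  ∀ u : V, ¬ ∃ v w, OptUnhappyMaxVia G k u v w

/-- Social SUM-cost of a (connected, finite) graph, as a natural number. -/
noncomputable def scSum {W : Type} [Fintype W] (H : SimpleGraph W) : ℕ :=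
  ∑ u : W, ∑ v : W, H.dist u v

/-- Social MAX-cost of a (connected, finite) graph, as a natural number. -/
noncomputable def scMax {W : Type} [Fintype W] (H : SimpleGraph W) : ℕ :=
  ∑ u : W, Finset.univ.sup (H.dist u)

/-- Price of anarchy over `n`-vertex trees for a given notion of equilibrium and
social cost: (max social cost of an equilibrium tree) / (min social cost of a tree). -/
noncomputable def PoA (n : ℕ) (eqPred : SimpleGraph (Fin n) → Prop)
    (sc : SimpleGraph (Fin n) → ℕ) : ℚ :=
  ((sSup {m : ℕ | ∃ T : SimpleGraph (Fin n), T.IsTree ∧ eqPred T ∧ sc T = m} : ℕ) : ℚ) /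
  ((sInf {m : ℕ | ∃ T : SimpleGraph (Fin n), T.IsTree ∧ sc T = m} : ℕ) : ℚ)



section Aux
variable {V : Type} {G : SimpleGraph V} {u v w x y z c : V}

lemma edist_eq_dist (h : G.Reachable u v) : G.edist u v = (G.dist u v : ℕ∞) := by
  rw [SimpleGraph.dist, ENat.coe_toNat (edist_ne_top_iff_reachable.mpr h)]

lemma dist_split_le [DecidableEq V] (p : G.Walk x y) (hc : c ∈ p.support) :
    G.dist x c + G.dist c y ≤ p.length := by
  have h3 := congrArg Walk.length (p.take_spec hc)
  rw [Walk.length_append] at h3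
  have h1 := SimpleGraph.dist_le (p.takeUntil c hc)
  have h2 := SimpleGraph.dist_le (p.dropUntil c hc)
  omega

lemma tree_path_length_eq (hT : G.IsTree) {p : G.Walk x y} (hp : p.IsPath) :
    p.length = G.dist x y := by
  obtain ⟨q, hq, hlen⟩ := hT.isConnected.exists_path_of_dist x y
  have heq : (⟨p, hp⟩ : G.Path x y) = ⟨q, hq⟩ := hT.IsAcyclic.path_unique _ _
  rw [← hlen]
  exact congrArg Walk.length (congrArg Subtype.val heq)

lemma tree_dist_split [DecidableEq V] (hT : G.IsTree) {p : G.Walk x y} (hp : p.IsPath) (hc : c ∈ p.support) :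
    G.dist x c + G.dist c y = G.dist x y := by
  have h1 : (p.takeUntil c hc).length = G.dist x c := tree_path_length_eq hT (hp.takeUntil hc)
  have h2 : (p.dropUntil c hc).length = G.dist c y := tree_path_length_eq hT (hp.dropUntil hc)
  have h3 := congrArg Walk.length (p.take_spec hc)
  rw [Walk.length_append] at h3
  have h4 : p.length = G.dist x y := tree_path_length_eq hT hp
  omega

lemma exists_intermediate (hconn : G.Connected) {D : ℕ} (hD : G.dist x z = D)
    {i : ℕ} (hi : i ≤ D) : ∃ y, G.dist x y = i ∧ G.dist y z = D - i := by
  induction i with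
  | zero => exact ⟨x, by simp, by simpa using hD⟩
  | succ n ih =>
    obtain ⟨y, hxy, hyz⟩ := ih (by omega)
    obtain ⟨p, hp⟩ := hconn.exists_walk_length_eq_dist y z
    cases p with
    | nil => simp at hp; omega
    | @cons _ y₁ _ hadj q =>
      have hq : G.dist y₁ z ≤ q.length := SimpleGraph.dist_le q
      rw [Walk.length_cons] at hp
      have hyy₁ : G.dist y y₁ = 1 := SimpleGraph.dist_eq_one_iff_adj.mpr hadj
      have t1 : G.dist y z ≤ G.dist y y₁ + G.dist y₁ z := hconn.dist_triangle
      have t3 : G.dist x y₁ ≤ G.dist x y + G.dist y y₁ := hconn.dist_triangle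
      have t4 : G.dist x z ≤ G.dist x y₁ + G.dist y₁ z := hconn.dist_triangle
      exact ⟨y₁, by omega, by omega⟩

lemma isPath_append {p : G.Walk u v} {q : G.Walk v w} (hp : p.IsPath) (hq : q.IsPath)
    (h : ∀ x, x ∈ p.support → x ∈ q.support → x = v) : (p.append q).IsPath := by
  rw [Walk.isPath_def, Walk.support_append]
  have hqc := q.support_eq_cons
  have hqn := hq.support_nodup
  rw [hqc] at hqn
  refine List.Nodup.append hp.support_nodup (List.nodup_cons.mp hqn).2 ?_
  intro a hap haq
  have : a = v := h a hap (hqc ▸ List.mem_cons_of_mem _ haq)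
  exact (List.nodup_cons.mp hqn).1 (this ▸ haq)

lemma exists_first (S : Set V) :
    ∀ {a b : V} (q : G.Walk a b), b ∈ S →
      ∃ (c : V) (_ : c ∈ S) (q₁ : G.Walk a c) (q₂ : G.Walk c b),
        q = q₁.append q₂ ∧ (∀ x ∈ q₁.support, x ∈ S → x = c) := by
  intro a b q
  induction q with
  | @nil a => intro hb; exact ⟨a, hb, Walk.nil, Walk.nil, rfl, fun x hx _ => by simpa using hx⟩
  | @cons a a₁ b hadj q ih =>
    intro hb
    by_cases ha : a ∈ S
    · exact ⟨a, ha, Walk.nil, Walk.cons hadj q, by simp, by simp⟩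
    · obtain ⟨c, hc, q₁, q₂, heq, hfirst⟩ := ih hb
      refine ⟨c, hc, Walk.cons hadj q₁, q₂, by simp [heq], ?_⟩
      intro x hx hxS
      rw [Walk.support_cons] at hx
      rcases List.mem_cons.mp hx with rfl | hx
      · exact absurd hxS ha
      · exact hfirst x hx hxS

/-- Gate of `a` on the tree path `p : x → y`. -/
lemma exists_gate [DecidableEq V] (hT : G.IsTree) {p : G.Walk x y} (hp : p.IsPath) (a : V) :
    ∃ c, ∃ _ : c ∈ p.support,
      G.dist x a = G.dist x c + G.dist c a ∧
      G.dist y a = G.dist y c + G.dist c a ∧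
      ∃ q : G.Walk c a, q.IsPath ∧ q.length = G.dist c a ∧
        (∀ ξ ∈ q.support, ξ ∈ p.support → ξ = c) := by
  obtain ⟨q0, hq0, hq0len⟩ := hT.isConnected.exists_path_of_dist a x
  obtain ⟨c, hcp, q₁, q₂, heq, hfirst⟩ := exists_first {v | v ∈ p.support} q0 p.start_mem_support
  subst heq
  have hq₁ : q₁.IsPath := hq0.of_append_left
  have hq₂ : q₂.IsPath := hq0.of_append_right
  have hl₁ : q₁.length = G.dist a c := tree_path_length_eq hT hq₁
  have hl₂ : q₂.length = G.dist c x := tree_path_length_eq hT hq₂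
  rw [Walk.length_append] at hq0len
  -- x-equation
  have hx : G.dist x a = G.dist x c + G.dist c a := by
    have e0 : G.dist x a = G.dist a x := SimpleGraph.dist_comm
    have e1 : G.dist a c = G.dist c a := SimpleGraph.dist_comm
    have e2 : G.dist c x = G.dist x c := SimpleGraph.dist_comm
    omega
  -- y-equation via the path y → c → a
  have hyeq : G.dist y a = G.dist y c + G.dist c a := by
    have hP₂ : (p.dropUntil c hcp).IsPath := hp.dropUntil hcp
    have hpath : ((p.dropUntil c hcp).reverse.append q₁.reverse).IsPath := by
      refine isPath_append hP₂.reverse hq₁.reverse ?_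
      intro ξ h1 h2
      rw [Walk.support_reverse, List.mem_reverse] at h1 h2
      exact hfirst ξ h2 (p.support_dropUntil_subset hcp h1)
    have hlen := tree_path_length_eq hT hpath
    rw [Walk.length_append, Walk.length_reverse, Walk.length_reverse] at hlen
    have hdc : (p.dropUntil c hcp).length = G.dist c y := tree_path_length_eq hT hP₂
    have e1 : G.dist c y = G.dist y c := SimpleGraph.dist_comm
    have e2 : G.dist a c = G.dist c a := SimpleGraph.dist_comm
    omega
  exact ⟨c, hcp, hx, hyeq, q₁.reverse, hq₁.reverse, by
      rw [Walk.length_reverse, hl₁, SimpleGraph.dist_comm], by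
      intro ξ hξ hξp
      rw [Walk.support_reverse, List.mem_reverse] at hξ
      exact hfirst ξ hξ hξp⟩


lemma combo [DecidableEq V] (hT : G.IsTree) {u xd : V} {d k : ℕ} (hd : G.dist u xd = d)
    (hmax : ∀ a b, G.dist a b ≤ d) (hd4 : 4 ≤ d) (hk4 : 4 ≤ k) :
    ∃ v, G.Adj u v ∧ ∃ w, G.dist u w = (min d k + 1) / 2 ∧
      (∀ a, G.dist u a ≤ k → a ≠ u →
        ∃ q : G.Walk w a, q.length + 2 ≤ min d k ∧ (∀ ξ ∈ q.support, G.dist u ξ ≤ k) ∧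
          u ∉ q.support) ∧
      ∃ a₀, G.dist u a₀ = min d k := by
  set r := min d k with hr
  set m := (r + 1) / 2 with hm
  have hr4 : 4 ≤ r := le_min hd4 hk4
  have hrd : r ≤ d := min_le_left _ _
  have hrk : r ≤ k := min_le_right _ _
  have hm2 : 2 ≤ m := by omega
  have hmr : m + 2 ≤ r := by omega
  have hconn := hT.isConnected
  obtain ⟨p, hp, hplen⟩ := hconn.exists_path_of_dist u xd
  rw [hd] at hplen
  have hv : G.Adj u (p.getVert 1) := by
    have := p.adj_getVert_succ (i := 0) (by omega)
    rwa [p.getVert_zero] at this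
  obtain ⟨w, hw1, hw2⟩ := exists_intermediate hconn hd (show m ≤ d by omega)
  have hwp : w ∈ p.support := by
    obtain ⟨c, hc, h1, h2, -⟩ := exists_gate hT hp w
    have h3 : G.dist u c + G.dist c xd = d := by rw [← hd]; exact tree_dist_split hT hp hc
    have e1 : G.dist xd w = G.dist w xd := SimpleGraph.dist_comm
    have e2 : G.dist xd c = G.dist c xd := SimpleGraph.dist_comm
    have hcw : G.dist c w = 0 := by omega
    have : c = w := hconn.dist_eq_zero_iff.mp hcw
    exact this ▸ hc
  have ha₀ : ∃ a₀, G.dist u a₀ = r := by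
    rcases le_total d k with h | h
    · exact ⟨xd, by rw [hd]; omega⟩
    · obtain ⟨a₀, h1, -⟩ := exists_intermediate hconn hd (show r ≤ d by omega)
      exact ⟨a₀, h1⟩
  refine ⟨_, hv, w, hw1, ?_, ha₀⟩
  intro a hak hau
  obtain ⟨c, hc, hxa, hya, q₁, hq₁, hq₁len, hq₁meet⟩ := exists_gate hT hp a
  have hsplitc : G.dist u c + G.dist c xd = d := by rw [← hd]; exact tree_dist_split hT hp hc
  have hxda : G.dist xd a ≤ d := hmax _ _
  have e1 : G.dist xd c = G.dist c xd := SimpleGraph.dist_comm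
  have hta : G.dist c a ≤ G.dist u c := by omega
  have hjt : G.dist u c + G.dist c a ≤ r := by
    have h1 := hmax u a
    omega
  have hj1 : 1 ≤ G.dist u c := by
    rcases Nat.eq_zero_or_pos (G.dist u c) with h0 | h
    · exfalso; apply hau
      have : G.dist u a = 0 := by omega
      exact (hconn.dist_eq_zero_iff.mp this).symm
    · omega
  have hq₁sup : ∀ ξ ∈ q₁.support, G.dist u ξ ≤ k := by
    intro ξ hξ
    have h1 := tree_dist_split hT hq₁ hξ
    have h2 : G.dist u ξ ≤ G.dist u c + G.dist c ξ := hconn.dist_triangle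
    omega
  have hq₁nu : u ∉ q₁.support := by
    intro hu
    have : u = c := hq₁meet u hu p.start_mem_support
    have : G.dist u c = 0 := by rw [← this]; exact SimpleGraph.dist_self
    omega
  have hP₁ : (p.takeUntil w hwp).IsPath := hp.takeUntil hwp
  have hP₂ : (p.dropUntil w hwp).IsPath := hp.dropUntil hwp
  have hcsplit : c ∈ (p.takeUntil w hwp).support ∨ c ∈ (p.dropUntil w hwp).support := by
    have hspec := p.take_spec hwp
    rw [← hspec] at hc
    exact (Walk.mem_support_append_iff _ _).mp hc
  rcases hcsplit with hc1 | hc2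
  · -- c on the u-side of w
    have hsplit1 : G.dist u c + G.dist c w = m := by
      have := tree_dist_split hT hP₁ hc1
      rwa [hw1] at this
    have hseg : ((p.takeUntil w hwp).dropUntil c hc1).IsPath := hP₁.dropUntil hc1
    have hseglen : ((p.takeUntil w hwp).dropUntil c hc1).length = G.dist c w :=
      tree_path_length_eq hT hseg
    refine ⟨((p.takeUntil w hwp).dropUntil c hc1).reverse.append q₁, ?_, ?_, ?_⟩
    · rw [Walk.length_append, Walk.length_reverse, hseglen, hq₁len]
      omega
    · intro ξ hξ
      rcases (Walk.mem_support_append_iff _ _).mp hξ with h | h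
      · rw [Walk.support_reverse, List.mem_reverse] at h
        have h' : ξ ∈ (p.takeUntil w hwp).support :=
          (p.takeUntil w hwp).support_dropUntil_subset hc1 h
        have h1 := tree_dist_split hT hP₁ h'
        rw [hw1] at h1
        omega
      · exact hq₁sup ξ h
    · intro hu
      rcases (Walk.mem_support_append_iff _ _).mp hu with h | h
      · rw [Walk.support_reverse, List.mem_reverse] at h
        have h1 := tree_dist_split hT hseg h
        have e2 : G.dist c u = G.dist u c := SimpleGraph.dist_comm
        rw [hw1] at h1
        omega
      · exact hq₁nu h
  · -- c on the xd-side of w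
    have hwxd : G.dist w xd = d - m := hw2
    have hsplit2 : G.dist w c + G.dist c xd = d - m := by
      have := tree_dist_split hT hP₂ hc2
      rwa [hwxd] at this
    have hseg : ((p.dropUntil w hwp).takeUntil c hc2).IsPath := hP₂.takeUntil hc2
    have hseglen : ((p.dropUntil w hwp).takeUntil c hc2).length = G.dist w c :=
      tree_path_length_eq hT hseg
    refine ⟨((p.dropUntil w hwp).takeUntil c hc2).append q₁, ?_, ?_, ?_⟩
    · rw [Walk.length_append, hseglen, hq₁len]
      omega
    · intro ξ hξ
      rcases (Walk.mem_support_append_iff _ _).mp hξ with h | h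
      · have h1 := tree_dist_split hT hseg h
        have h2 : G.dist u ξ ≤ G.dist u w + G.dist w ξ := hconn.dist_triangle
        omega
      · exact hq₁sup ξ h
    · intro hu
      rcases (Walk.mem_support_append_iff _ _).mp hu with h | h
      · have h' : u ∈ (p.dropUntil w hwp).support :=
          (p.dropUntil w hwp).support_takeUntil_subset hc2 h
        have h1 := tree_dist_split hT hP₂ h'
        have e2 : G.dist w u = G.dist u w := SimpleGraph.dist_comm
        rw [hwxd, hd] at h1
        omega
      · exact hq₁nu h

end Aux

section Compat
variable {V : Type} {W : Type} {G : SimpleGraph V} {H : SimpleGraph W}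
  {k : ℕ} {u : V} {ι : V → W}

/-- Push a walk along a vertex map that preserves adjacency on a predicate. -/
lemma push_walk_edist {A B : Type} {G₁ : SimpleGraph A} (G₂ : SimpleGraph B) (f : A → B)
    (P : A → Prop) (hstep : ∀ x y, P x → P y → G₁.Adj x y → G₂.Adj (f x) (f y)) :
    ∀ {a b : A} (q : G₁.Walk a b), (∀ ξ ∈ q.support, P ξ) →
      G₂.edist (f a) (f b) ≤ (q.length : ℕ∞) := by
  intro a b q
  induction q with
  | nil => intro _; simp
  | @cons a a₁ b hadj q ih =>
    intro hsup
    have hPa : P a := hsup a (Walk.start_mem_support _)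
    have hPa₁ : P a₁ := hsup a₁ (by rw [Walk.support_cons]; exact List.mem_cons_of_mem _ (Walk.start_mem_support _))
    have h1 : G₂.Adj (f a) (f a₁) := hstep _ _ hPa hPa₁ hadj
    have h2 : G₂.edist (f a₁) (f b) ≤ (q.length : ℕ∞) := ih (fun ξ hξ => hsup ξ (by rw [Walk.support_cons]; exact List.mem_cons_of_mem _ hξ))
    calc G₂.edist (f a) (f b) ≤ G₂.edist (f a) (f a₁) + G₂.edist (f a₁) (f b) :=
          SimpleGraph.edist_triangle
      _ ≤ 1 + (q.length : ℕ∞) := add_le_add (le_of_eq (edist_eq_one_iff_adj.mpr h1)) h2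
      _ = ((Walk.cons hadj q).length : ℕ∞) := by
          rw [Walk.length_cons, Nat.cast_add, Nat.cast_one, add_comm]

lemma pull_walk_edist (hinj : Set.InjOn ι (ball G u k))
    (hadjH : ∀ a ∈ ball G u k, ∀ b ∈ ball G u k, (H.Adj (ι a) (ι b) ↔ G.Adj a b)) :
    ∀ {x y : W} (q : H.Walk x y), (∀ s ∈ q.support, s ∈ ι '' ball G u k) →
      ∀ a, a ∈ ball G u k → ι a = x →
        ∃ b, b ∈ ball G u k ∧ ι b = y ∧ G.edist a b ≤ (q.length : ℕ∞) := by
  intro x y q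
  induction q with
  | nil => intro _ a ha hia; exact ⟨a, ha, hia, by simp⟩
  | @cons x x₁ y hadj q ih =>
    intro hsup a ha hia
    obtain ⟨a₁, ha₁, hia₁⟩ := hsup x₁ (by rw [Walk.support_cons]; exact List.mem_cons_of_mem _ (Walk.start_mem_support _))
    have hGadj : G.Adj a a₁ := by
      rw [← hadjH a ha a₁ ha₁]
      rw [hia, hia₁]; exact hadj
    obtain ⟨b, hb, hib, hlen⟩ := ih (fun s hs => hsup s (by rw [Walk.support_cons]; exact List.mem_cons_of_mem _ hs)) a₁ ha₁ hia₁
    refine ⟨b, hb, hib, ?_⟩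
    calc G.edist a b ≤ G.edist a a₁ + G.edist a₁ b := SimpleGraph.edist_triangle
      _ ≤ 1 + (q.length : ℕ∞) := add_le_add (le_of_eq (edist_eq_one_iff_adj.mpr hGadj)) hlen
      _ = ((Walk.cons hadj q).length : ℕ∞) := by
          rw [Walk.length_cons, Nat.cast_add, Nat.cast_one, add_comm]

/-- Distances from `u` within the view are preserved in any compatible graph. -/
lemma view_edist [DecidableEq W] (hconn : G.Connected) (hinj : Set.InjOn ι (ball G u k))
    (hview : {x : W | H.edist (ι u) x ≤ (k : ℕ∞)} = ι '' ball G u k)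
    (hadjH : ∀ a ∈ ball G u k, ∀ b ∈ ball G u k, (H.Adj (ι a) (ι b) ↔ G.Adj a b))
    {a : V} (ha : a ∈ ball G u k) : H.edist (ι u) (ι a) = G.edist u a := by
  classical
  have hu : u ∈ ball G u k := by
    simp only [ball, Set.mem_setOf_eq, SimpleGraph.edist_self]; exact zero_le
  have hle : H.edist (ι u) (ι a) ≤ G.edist u a := by
    obtain ⟨p, hp, hplen⟩ := hconn.exists_path_of_dist u a
    have hsup : ∀ ξ ∈ p.support, ξ ∈ ball G u k := by
      intro ξ hξ
      have h1 := dist_split_le p hξ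
      rw [hplen] at h1
      have h2 : G.edist u ξ ≤ G.edist u a := by
        rw [edist_eq_dist (hconn u ξ), edist_eq_dist (hconn u a)]
        exact_mod_cast (by omega : G.dist u ξ ≤ G.dist u a)
      exact le_trans h2 ha
    have := push_walk_edist H ι (· ∈ ball G u k)
      (fun x y hx hy hxy => (hadjH x hx y hy).mpr hxy) p hsup
    rwa [edist_eq_dist (hconn u a), ← hplen] at *
  refine le_antisymm hle ?_
  have hGne : G.edist u a ≠ ⊤ := edist_ne_top_iff_reachable.mpr (hconn u a)
  have hne : H.edist (ι u) (ι a) ≠ ⊤ := fun htop => hGne (top_le_iff.mp (htop ▸ hle))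
  obtain ⟨E, hE⟩ : ∃ E : ℕ, H.edist (ι u) (ι a) = E := ⟨_, (ENat.coe_toNat hne).symm⟩
  obtain ⟨q, hq⟩ := exists_walk_of_edist_eq_coe hE
  have hsup : ∀ s ∈ q.support, s ∈ ι '' ball G u k := by
    intro s hs
    rw [← hview]
    have h1 : H.edist (ι u) s ≤ (q.takeUntil s hs).length := edist_le _
    have h2 : (q.takeUntil s hs).length ≤ q.length := Walk.length_takeUntil_le _ _
    have h3 : (q.length : ℕ∞) ≤ (k : ℕ∞) := by
      rw [hq, ← hE]
      exact le_trans hle ha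
    exact le_trans h1 (le_trans (by exact_mod_cast h2) h3)
  obtain ⟨b, hb, hib, hba⟩ := pull_walk_edist hinj hadjH q hsup u hu rfl
  have hba' : b = a := hinj hb ha hib
  subst hba'
  rw [hE, ← hq]
  exact hba

end Compat


section Main

lemma ball_iff_dist {V : Type} {G : SimpleGraph V} (hconn : G.Connected) {u a : V} {k : ℕ} :
    a ∈ ball G u k ↔ G.dist u a ≤ k := by
  simp only [ball, Set.mem_setOf_eq, edist_eq_dist (hconn u a), Nat.cast_le]

lemma unhappy_main {V : Type} {G : SimpleGraph V} (hconn : G.Connected) {k r : ℕ}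
    (hrk : r ≤ k) (hr4 : 4 ≤ r) {u v w : V} (hadj : G.Adj u v) (hw2 : 2 ≤ G.dist u w)
    (hwk : G.dist u w ≤ k) (ha₀ : ∃ a₀, G.dist u a₀ = r)
    (hwalk : ∀ a, G.dist u a ≤ k → a ≠ u →
      ∃ q : G.Walk w a, q.length + 2 ≤ r ∧ (∀ ξ ∈ q.support, G.dist u ξ ≤ k) ∧ u ∉ q.support) :
    UnhappyMaxVia G k u v w := by
  classical
  have hvalid : ValidSwap G k u v w := by
    refine ⟨hadj, ?_, ?_, ?_⟩
    · rw [edist_eq_dist (hconn u w)]; exact_mod_cast hwk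
    · intro h
      have : G.dist u w = 1 := SimpleGraph.dist_eq_one_iff_adj.mpr h
      omega
    · intro h
      subst h
      rw [SimpleGraph.dist_self] at hw2
      omega
  refine ⟨hvalid, ?_⟩
  intro W H ι hcompat
  obtain ⟨hfin, hHconn, hinj, hview, hadjH⟩ := hcompat
  haveI : Finite W := hfin
  haveI : Fintype W := Fintype.ofFinite W
  have hu : u ∈ ball G u k := by
    simp only [ball, Set.mem_setOf_eq, SimpleGraph.edist_self]; exact zero_le
  have hwball : w ∈ ball G u k := (ball_iff_dist hconn).mpr hwk
  have hwu : w ≠ u := by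
    intro h; subst h; rw [SimpleGraph.dist_self] at hw2; omega
  have hC3 : ∀ a ∈ ball G u k, H.edist (ι u) (ι a) = G.edist u a :=
    fun a ha => view_edist hconn hinj hview hadjH ha
  -- the swapped graph
  set H' := swapGraph H (ι u) (ι v) (ι w) with hH'
  have hH'adj1 : H'.Adj (ι u) (ι w) := by
    rw [hH', swapGraph, fromEdgeSet_adj]
    exact ⟨Or.inr rfl, fun h => hwu (hinj hwball hu h.symm)⟩
  have hH'step : ∀ x y : W, x ≠ ι u → y ≠ ι u → H.Adj x y → H'.Adj x y := by
    intro x y hx hy hxy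
    rw [hH', swapGraph, fromEdgeSet_adj]
    refine ⟨Or.inl ⟨hxy, ?_⟩, hxy.ne⟩
    intro h
    rw [Set.mem_singleton_iff, Sym2.eq_iff] at h
    rcases h with ⟨h1, -⟩ | ⟨-, h2⟩
    · exact hx h1
    · exact hy h2
  -- the current cost
  set S := cMax H (ι u) with hS
  have hSle : S ≤ ((Finset.univ.sup fun z => H.dist (ι u) z : ℕ) : ℕ∞) := by
    refine iSup_le fun z => ?_
    rw [edist_eq_dist (hHconn _ _)]
    exact_mod_cast Finset.le_sup (Finset.mem_univ z)
  have hSne : S ≠ ⊤ := fun h => by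
    rw [h] at hSle
    exact (ENat.coe_ne_top _) (top_le_iff.mp hSle)
  obtain ⟨s, hs⟩ : ∃ s : ℕ, S = (s : ℕ∞) := ⟨S.toNat, (ENat.coe_toNat hSne).symm⟩
  have hsr : r ≤ s := by
    obtain ⟨a₀, ha₀'⟩ := ha₀
    have ha₀b : a₀ ∈ ball G u k := (ball_iff_dist hconn).mpr (by omega)
    have h1 : H.edist (ι u) (ι a₀) = (r : ℕ∞) := by
      rw [hC3 a₀ ha₀b, edist_eq_dist (hconn u a₀), ha₀']
    have h2 : H.edist (ι u) (ι a₀) ≤ S := le_iSup (fun z => H.edist (ι u) z) (ι a₀)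
    rw [h1, hs] at h2
    exact_mod_cast h2
  -- pushing walks of G that avoid u into H'
  have hpush : ∀ {a b : V} (q : G.Walk a b), (∀ ξ ∈ q.support, G.dist u ξ ≤ k) →
      u ∉ q.support → H'.edist (ι a) (ι b) ≤ (q.length : ℕ∞) := by
    intro a b q hq hun
    refine push_walk_edist H' ι (fun ξ => ξ ∈ ball G u k ∧ ξ ≠ u) ?_ q ?_
    · intro x y hx hy hxy
      exact hH'step _ _ (fun h => hx.2 (hinj hx.1 hu h)) (fun h => hy.2 (hinj hy.1 hu h))
        ((hadjH x hx.1 y hy.1).mpr hxy)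
    · intro ξ hξ
      exact ⟨(ball_iff_dist hconn).mpr (hq ξ hξ), fun h => hun (h ▸ hξ)⟩
  -- the key bound
  have hkey : ∀ z : W, H'.edist (ι u) z ≤ ((s - 1 : ℕ) : ℕ∞) := by
    intro z
    have hzS : H.edist (ι u) z ≤ S := le_iSup (fun z => H.edist (ι u) z) z
    have hzdist : H.edist (ι u) z = (H.dist (ι u) z : ℕ∞) := edist_eq_dist (hHconn _ _)
    set D := H.dist (ι u) z with hD
    have hDs : D ≤ s := by
      rw [hzdist, hs] at hzS; exact_mod_cast hzS
    by_cases hDk : D ≤ k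
    · -- z is in the view
      have hzview : z ∈ ι '' ball G u k := by
        rw [← hview]
        simp only [Set.mem_setOf_eq]
        rw [hzdist]
        exact_mod_cast hDk
      obtain ⟨a, ha, hia⟩ := hzview
      subst hia
      by_cases hau : a = u
      · subst hau
        rw [SimpleGraph.edist_self]
        exact zero_le
      · obtain ⟨q, hql, hqs, hqu⟩ := hwalk a ((ball_iff_dist hconn).mp ha) hau
        have h1 : H'.edist (ι w) (ι a) ≤ (q.length : ℕ∞) := hpush q hqs hqu
        calc H'.edist (ι u) (ι a) ≤ H'.edist (ι u) (ι w) + H'.edist (ι w) (ι a) :=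
              SimpleGraph.edist_triangle
          _ ≤ 1 + (q.length : ℕ∞) :=
              add_le_add (le_of_eq (edist_eq_one_iff_adj.mpr hH'adj1)) h1
          _ = ((1 + q.length : ℕ) : ℕ∞) := by rw [Nat.cast_add, Nat.cast_one]
          _ ≤ ((s - 1 : ℕ) : ℕ∞) := by exact_mod_cast (by omega : 1 + q.length ≤ s - 1)
    · -- z is far away
      push_neg at hDk
      obtain ⟨y, hy1, hy2⟩ := exists_intermediate hHconn hD.symm (show k ≤ D by omega)
      have hyview : y ∈ ι '' ball G u k := by
        rw [← hview]
        simp only [Set.mem_setOf_eq]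
        rw [edist_eq_dist (hHconn _ _), hy1]
      obtain ⟨b, hb, hib⟩ := hyview
      subst hib
      have hbdist : G.dist u b = k := by
        have h1 := hC3 b hb
        rw [edist_eq_dist (hHconn _ _), edist_eq_dist (hconn u b), hy1] at h1
        exact_mod_cast h1.symm
      have hbu : b ≠ u := by
        intro h; subst h
        rw [SimpleGraph.dist_self] at hbdist
        omega
      obtain ⟨q, hql, hqs, hqu⟩ := hwalk b (by omega) hbu
      have h1 : H'.edist (ι w) (ι b) ≤ (q.length : ℕ∞) := hpush q hqs hqu
      -- suffix from y = ι b to z avoiding ι u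
      obtain ⟨π, hπ⟩ := (hHconn (ι b) z).exists_walk_length_eq_dist
      have hπu : ι u ∉ π.support := by
        intro hmem
        have h2 := dist_split_le π hmem
        have h3 : H.dist (ι b) (ι u) = k := by
          rw [SimpleGraph.dist_comm]; exact hy1
        rw [hπ, hy2, h3, ← hD] at h2
        omega
      have h4 : H'.edist (ι b) z ≤ (π.length : ℕ∞) := by
        refine push_walk_edist H' id (fun ξ => ξ ≠ ι u) ?_ π ?_
        · intro x y hx hy hxy
          exact hH'step x y hx hy hxy
        · intro ξ hξ
          exact fun h => hπu (h ▸ hξ)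
      rw [hπ, hy2] at h4
      calc H'.edist (ι u) z ≤ H'.edist (ι u) (ι b) + H'.edist (ι b) z :=
            SimpleGraph.edist_triangle
        _ ≤ (H'.edist (ι u) (ι w) + H'.edist (ι w) (ι b)) + H'.edist (ι b) z :=
            add_le_add SimpleGraph.edist_triangle le_rfl
        _ ≤ (1 + (q.length : ℕ∞)) + ((D - k : ℕ) : ℕ∞) :=
            add_le_add (add_le_add (le_of_eq (edist_eq_one_iff_adj.mpr hH'adj1)) h1) h4
        _ = ((1 + q.length + (D - k) : ℕ) : ℕ∞) := by push_cast; ring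
        _ ≤ ((s - 1 : ℕ) : ℕ∞) := by
            exact_mod_cast (by omega : 1 + q.length + (D - k) ≤ s - 1)
  -- conclude
  have hfinal : cMax H' (ι u) ≤ ((s - 1 : ℕ) : ℕ∞) := iSup_le hkey
  have : ((s - 1 : ℕ) : ℕ∞) < ((s : ℕ) : ℕ∞) := by
    exact_mod_cast (by omega : s - 1 < s)
  rw [hS] at hs
  calc cMax H' (ι u) ≤ ((s - 1 : ℕ) : ℕ∞) := hfinal
    _ < (s : ℕ∞) := this
    _ = cMax H (ι u) := hs.symm

end Main


section Diam

lemma equilibrium_diam {n k : ℕ} (hk : 4 ≤ k) {T : SimpleGraph (Fin n)}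
    (hT : T.IsTree) (heq : MaxEquilibrium T k) : ∀ x y : Fin n, T.edist x y ≤ 3 := by
  classical
  by_contra hbad
  push_neg at hbad
  obtain ⟨x, y, hxy⟩ := hbad
  have hconn := hT.isConnected
  have hxy4 : 4 ≤ T.dist x y := by
    rw [edist_eq_dist (hconn x y)] at hxy
    exact Nat.succ_le_of_lt (by exact_mod_cast hxy)
  obtain ⟨⟨u, xd⟩, -, hmaxp⟩ := Finset.exists_max_image (Finset.univ : Finset (Fin n × Fin n))
    (fun pr => T.dist pr.1 pr.2) ⟨(x, y), Finset.mem_univ _⟩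
  have hmax : ∀ a b : Fin n, T.dist a b ≤ T.dist u xd :=
    fun a b => hmaxp (a, b) (Finset.mem_univ _)
  have hd4 : 4 ≤ T.dist u xd := le_trans hxy4 (hmax x y)
  obtain ⟨v, hv, w, hw1, hwalk, ha₀⟩ := combo hT rfl hmax hd4 hk
  set d := T.dist u xd with hd
  have hr4 : 4 ≤ min d k := le_min hd4 hk
  have hunhappy : UnhappyMaxVia T k u v w := by
    refine unhappy_main hconn (min_le_right d k) hr4 hv ?_ ?_ ha₀ hwalk
    · rw [hw1]; omega
    · rw [hw1]
      have : min d k ≤ k := min_le_right _ _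
      omega
  exact heq u ⟨v, w, hunhappy⟩

end Diam

section Counting

variable {n : ℕ} {T : SimpleGraph (Fin n)}

lemma central_small (hT : T.IsTree) {x y c₁ : Fin n} {p : T.Walk x y} (hp : p.IsPath)
    (hd : T.dist x y = 3) (hlen : p.length = 3) (hmax3 : ∀ a b : Fin n, T.dist a b ≤ 3)
    (hc₁ : c₁ ∈ p.support) {i : ℕ} (hi1 : T.dist x c₁ = i) (hil : 1 ≤ i) (hir : i ≤ 2) :
    ∀ z, T.dist c₁ z ≤ 2 := by
  classical
  intro z
  have hconn := hT.isConnected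
  have hsplit1 : T.dist x c₁ + T.dist c₁ y = 3 := by rw [← hd]; exact tree_dist_split hT hp hc₁
  obtain ⟨c, hc, hxz, hyz, -⟩ := exists_gate hT hp z
  have hsplitc : T.dist x c + T.dist c y = 3 := by rw [← hd]; exact tree_dist_split hT hp hc
  have h1 : T.dist x z ≤ 3 := hmax3 _ _
  have h2 : T.dist y z ≤ 3 := hmax3 _ _
  -- where is c w.r.t. c₁
  have hP₁ : (p.takeUntil c₁ hc₁).IsPath := hp.takeUntil hc₁
  have hP₂ : (p.dropUntil c₁ hc₁).IsPath := hp.dropUntil hc₁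
  have hcsplit : c ∈ (p.takeUntil c₁ hc₁).support ∨ c ∈ (p.dropUntil c₁ hc₁).support := by
    have hspec := p.take_spec hc₁
    rw [← hspec] at hc
    exact (Walk.mem_support_append_iff _ _).mp hc
  have htri : T.dist c₁ z ≤ T.dist c₁ c + T.dist c z := hconn.dist_triangle
  have e2 : T.dist c₁ c = T.dist c c₁ := SimpleGraph.dist_comm
  have e3 : T.dist y c = T.dist c y := SimpleGraph.dist_comm
  rcases hcsplit with h | h
  · have h3 := tree_dist_split hT hP₁ h
    rw [hi1] at h3
    omega
  · have h3 := tree_dist_split hT hP₂ h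
    omega

lemma scMax_le_of_diam3 (hn : 2 ≤ n) (hT : T.IsTree)
    (hdia : ∀ x y : Fin n, T.dist x y ≤ 3) : scMax T ≤ 3 * n - 2 := by
  classical
  have hconn := hT.isConnected
  have hecc3 : ∀ z : Fin n, Finset.univ.sup (T.dist z) ≤ 3 :=
    fun z => Finset.sup_le fun b _ => hdia z b
  have key : ∃ z₁ z₂ : Fin n, z₁ ≠ z₂ ∧
      Finset.univ.sup (T.dist z₁) ≤ 2 ∧ Finset.univ.sup (T.dist z₂) ≤ 2 := by
    by_cases h3 : ∃ x y : Fin n, T.dist x y = 3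
    · obtain ⟨x, y, hxy⟩ := h3
      obtain ⟨p, hp, hplen⟩ := hconn.exists_path_of_dist x y
      rw [hxy] at hplen
      set z₁ := p.getVert 1 with hz₁
      set z₂ := p.getVert 2 with hz₂
      have hm₁ : z₁ ∈ p.support := Walk.mem_support_iff_exists_getVert.mpr ⟨1, rfl, by omega⟩
      have hm₂ : z₂ ∈ p.support := Walk.mem_support_iff_exists_getVert.mpr ⟨2, rfl, by omega⟩
      have ha1 : T.Adj x z₁ := by
        have := p.adj_getVert_succ (i := 0) (by omega)
        rwa [p.getVert_zero] at this
      have ha2 : T.Adj z₁ z₂ := p.adj_getVert_succ (i := 1) (by omega)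
      have ha3 : T.Adj z₂ y := by
        have := p.adj_getVert_succ (i := 2) (by omega)
        rwa [show p.getVert 3 = y by rw [← hplen]; exact p.getVert_length] at this
      have hd1 : T.dist x z₁ = 1 := SimpleGraph.dist_eq_one_iff_adj.mpr ha1
      have hd2 : T.dist x z₂ = 2 := by
        have hle : T.dist x z₂ ≤ 2 := by
          have t1 : T.dist x z₂ ≤ T.dist x z₁ + T.dist z₁ z₂ := hconn.dist_triangle
          have : T.dist z₁ z₂ = 1 := SimpleGraph.dist_eq_one_iff_adj.mpr ha2
          omega
        have hge : 2 ≤ T.dist x z₂ := by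
          have t1 : T.dist x y ≤ T.dist x z₂ + T.dist z₂ y := hconn.dist_triangle
          have : T.dist z₂ y = 1 := SimpleGraph.dist_eq_one_iff_adj.mpr ha3
          omega
        omega
      refine ⟨z₁, z₂, by intro h; rw [h, hd2] at hd1; omega, ?_, ?_⟩
      · exact Finset.sup_le fun b _ =>
          central_small hT hp hxy hplen hdia hm₁ hd1 (by omega) (by omega) b
      · exact Finset.sup_le fun b _ =>
          central_small hT hp hxy hplen hdia hm₂ hd2 (by omega) (by omega) b
    · push_neg at h3
      have hall : ∀ x y : Fin n, T.dist x y ≤ 2 := by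
        intro x y
        have := hdia x y
        have := h3 x y
        omega
      obtain ⟨z₁, z₂, hne⟩ := Fintype.exists_pair_of_one_lt_card
        (by simp only [Fintype.card_fin]; omega : 1 < Fintype.card (Fin n))
      exact ⟨z₁, z₂, hne, Finset.sup_le fun b _ => hall z₁ b,
        Finset.sup_le fun b _ => hall z₂ b⟩
  obtain ⟨z₁, z₂, hne, h1, h2⟩ := key
  have hz₂mem : z₂ ∈ Finset.univ.erase z₁ := Finset.mem_erase.mpr ⟨hne.symm, Finset.mem_univ _⟩
  have e1 : scMax T = Finset.univ.sup (T.dist z₁) +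
      ∑ z ∈ Finset.univ.erase z₁, Finset.univ.sup (T.dist z) :=
    (Finset.add_sum_erase _ _ (Finset.mem_univ z₁)).symm
  have e2 : ∑ z ∈ Finset.univ.erase z₁, Finset.univ.sup (T.dist z) =
      Finset.univ.sup (T.dist z₂) +
      ∑ z ∈ (Finset.univ.erase z₁).erase z₂, Finset.univ.sup (T.dist z) :=
    (Finset.add_sum_erase _ _ hz₂mem).symm
  have e3 : ∑ z ∈ (Finset.univ.erase z₁).erase z₂, Finset.univ.sup (T.dist z) ≤
      ((Finset.univ.erase z₁).erase z₂).card * 3 := by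
    simpa using Finset.sum_le_card_nsmul _ _ 3 (fun z _ => hecc3 z)
  have hcards : ((Finset.univ.erase z₁).erase z₂).card = n - 2 := by
    rw [Finset.card_erase_of_mem hz₂mem, Finset.card_erase_of_mem (Finset.mem_univ _)]
    simp only [Finset.card_univ, Fintype.card_fin]
    omega
  rw [e1, e2]
  rw [hcards] at e3
  omega

end Counting


section Lower

variable {n : ℕ} {T : SimpleGraph (Fin n)}

lemma ecc_pos (hT : T.IsTree) (hn : 2 ≤ n) (z : Fin n) : 1 ≤ Finset.univ.sup (T.dist z) := by
  obtain ⟨y, hy⟩ : ∃ y : Fin n, y ≠ z := by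
    obtain ⟨a, b, hab⟩ := Fintype.exists_pair_of_one_lt_card
      (by simp only [Fintype.card_fin]; omega : 1 < Fintype.card (Fin n))
    by_cases h : a = z
    · exact ⟨b, fun hbz => hab (h.trans hbz.symm)⟩
    · exact ⟨a, h⟩
  have h1 : 1 ≤ T.dist z y := hT.isConnected.pos_dist_of_ne (Ne.symm hy)
  exact le_trans h1 (Finset.le_sup (Finset.mem_univ y))

lemma unique_center (hT : T.IsTree) (hn : 3 ≤ n) {z₁ z₂ : Fin n}
    (h1 : Finset.univ.sup (T.dist z₁) ≤ 1) (h2 : Finset.univ.sup (T.dist z₂) ≤ 1) :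
    z₁ = z₂ := by
  classical
  by_contra hne
  have hconn := hT.isConnected
  have hdist : ∀ a b : Fin n, Finset.univ.sup (T.dist a) ≤ 1 → a ≠ b → T.Adj a b := by
    intro a b ha hab
    have hle : T.dist a b ≤ 1 := le_trans (Finset.le_sup (Finset.mem_univ b)) ha
    have hpos : 0 < T.dist a b := hconn.pos_dist_of_ne hab
    exact SimpleGraph.dist_eq_one_iff_adj.mp (by omega)
  obtain ⟨z₃, hz₃₁, hz₃₂⟩ : ∃ z₃ : Fin n, z₃ ≠ z₁ ∧ z₃ ≠ z₂ := by
    by_contra hno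
    push_neg at hno
    have hsub : (Finset.univ : Finset (Fin n)) ⊆ {z₁, z₂} := by
      intro t _
      rcases Classical.em (t = z₁) with h | h
      · simp [h]
      · simp [hno t h]
    have hcard := Finset.card_le_card hsub
    have : ({z₁, z₂} : Finset (Fin n)).card ≤ 2 :=
      le_trans (Finset.card_insert_le _ _) (by simp)
    simp only [Finset.card_univ, Fintype.card_fin] at hcard
    omega
  have a12 : T.Adj z₁ z₂ := hdist z₁ z₂ h1 hne
  have a13 : T.Adj z₁ z₃ := hdist z₁ z₃ h1 (Ne.symm hz₃₁)
  have a23 : T.Adj z₂ z₃ := hdist z₂ z₃ h2 (Ne.symm hz₃₂)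
  have hp1 : (Walk.cons a12 Walk.nil : T.Walk z₁ z₂).IsPath := by
    simp [Walk.isPath_def, hne]
  have hp2 : (Walk.cons a13 (Walk.cons a23.symm Walk.nil) : T.Walk z₁ z₂).IsPath := by
    simp [Walk.isPath_def, hne, hz₃₁.symm, hz₃₂]
  have := hT.IsAcyclic.path_unique ⟨_, hp1⟩ ⟨_, hp2⟩
  have hlen := congrArg (fun q : T.Path z₁ z₂ => q.1.length) this
  simp at hlen

lemma scMax_ge (hT : T.IsTree) (hn : 3 ≤ n) : 2 * n - 1 ≤ scMax T := by
  classical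
  by_cases hex : ∃ z₀ : Fin n, Finset.univ.sup (T.dist z₀) ≤ 1
  · obtain ⟨z₀, hz₀⟩ := hex
    have hothers : ∀ z ∈ Finset.univ.erase z₀, 2 ≤ Finset.univ.sup (T.dist z) := by
      intro z hz
      rcases Nat.lt_or_ge (Finset.univ.sup (T.dist z)) 2 with h | h
      · exact absurd (unique_center hT hn (by omega) hz₀) (Finset.mem_erase.mp hz).1
      · exact h
    have e1 : scMax T = Finset.univ.sup (T.dist z₀) +
        ∑ z ∈ Finset.univ.erase z₀, Finset.univ.sup (T.dist z) :=
      (Finset.add_sum_erase _ _ (Finset.mem_univ z₀)).symm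
    have e2 : (Finset.univ.erase z₀).card * 2 ≤
        ∑ z ∈ Finset.univ.erase z₀, Finset.univ.sup (T.dist z) := by
      simpa using Finset.card_nsmul_le_sum _ _ 2 hothers
    have hcard : (Finset.univ.erase z₀).card = n - 1 := by
      rw [Finset.card_erase_of_mem (Finset.mem_univ _)]
      simp only [Finset.card_univ, Fintype.card_fin]
    have h1 := ecc_pos hT (by omega) z₀
    rw [e1]
    rw [hcard] at e2
    omega
  · push_neg at hex
    have h2 : ∀ z ∈ (Finset.univ : Finset (Fin n)), 2 ≤ Finset.univ.sup (T.dist z) :=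
      fun z _ => hex z
    have e2 : (Finset.univ : Finset (Fin n)).card * 2 ≤ scMax T := by
      simpa [scMax] using Finset.card_nsmul_le_sum _ _ 2 h2
    simp only [Finset.card_univ, Fintype.card_fin] at e2
    omega

lemma scMax_fin2 {T : SimpleGraph (Fin 2)} (hT : T.IsTree) : scMax T = 2 := by
  have hconn := hT.isConnected
  have hne01 : (0 : Fin 2) ≠ 1 := by decide
  have hpos : 1 ≤ T.dist 0 1 := hconn.pos_dist_of_ne hne01
  have h01 : T.Adj 0 1 := by
    obtain ⟨y, hy1, -⟩ := exists_intermediate hconn (rfl : T.dist 0 1 = T.dist 0 1) hpos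
    have hadj : T.Adj 0 y := SimpleGraph.dist_eq_one_iff_adj.mp hy1
    have : y = 1 := by
      have h0 : y ≠ 0 := fun h => T.irrefl (h ▸ hadj)
      fin_cases y
      · exact absurd rfl h0
      · rfl
    rwa [this] at hadj
  have hd01 : T.dist 0 1 = 1 := SimpleGraph.dist_eq_one_iff_adj.mpr h01
  have hd10 : T.dist 1 0 = 1 := by rw [SimpleGraph.dist_comm]; exact hd01
  have he0 : Finset.univ.sup (T.dist 0) = 1 := by
    refine le_antisymm (Finset.sup_le fun b _ => ?_) ?_
    · fin_cases b
      · simp [SimpleGraph.dist_self]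
      · simp [hd01]
    · have hle := Finset.le_sup (f := T.dist 0) (Finset.mem_univ (1 : Fin 2))
      omega
  have he1 : Finset.univ.sup (T.dist 1) = 1 := by
    refine le_antisymm (Finset.sup_le fun b _ => ?_) ?_
    · fin_cases b
      · simp [hd10]
      · simp [SimpleGraph.dist_self]
    · have hle := Finset.le_sup (f := T.dist 1) (Finset.mem_univ (0 : Fin 2))
      omega
  simp [scMax, Fin.sum_univ_two, he0, he1]

end Lower

theorem stmt13 (k : ℕ) (hk : 4 ≤ k) (n : ℕ) (hn : 2 ≤ n) :
    (∀ T : SimpleGraph (Fin n), T.IsTree → MaxEquilibrium T k →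
      ∀ x y : Fin n, T.edist x y ≤ 3) ∧
    PoA n (fun T => MaxEquilibrium T k) scMax ≤ 3 / 2 := by
  classical
  have hdiam : ∀ T : SimpleGraph (Fin n), T.IsTree → MaxEquilibrium T k →
      ∀ x y : Fin n, T.edist x y ≤ 3 :=
    fun T hT heq => equilibrium_diam hk hT heq
  refine ⟨hdiam, ?_⟩
  have hbounds : ∃ A B : ℕ, 0 < A ∧ 2 * B ≤ 3 * A ∧
      (∀ m ∈ {m : ℕ | ∃ T : SimpleGraph (Fin n), T.IsTree ∧
        (fun T => MaxEquilibrium T k) T ∧ scMax T = m}, m ≤ B) ∧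
      (∀ m ∈ {m : ℕ | ∃ T : SimpleGraph (Fin n), T.IsTree ∧ scMax T = m}, A ≤ m) := by
    rcases eq_or_lt_of_le hn with h2 | h3
    · subst h2
      refine ⟨2, 2, by omega, by omega, ?_, ?_⟩
      · rintro m ⟨T, hT, -, rfl⟩
        exact le_of_eq (scMax_fin2 hT)
      · rintro m ⟨T, hT, rfl⟩
        exact le_of_eq (scMax_fin2 hT).symm
    · refine ⟨2 * n - 1, 3 * n - 2, by omega, by omega, ?_, ?_⟩
      · rintro m ⟨T, hT, heq, rfl⟩
        have hdist3 : ∀ x y : Fin n, T.dist x y ≤ 3 := by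
          intro x y
          have h := hdiam T hT heq x y
          rw [edist_eq_dist (hT.isConnected x y)] at h
          exact_mod_cast h
        exact scMax_le_of_diam3 (by omega) hT hdist3
      · rintro m ⟨T, hT, rfl⟩
        exact scMax_ge hT h3
  obtain ⟨A, B, hA, hAB, hNum, hDen⟩ := hbounds
  rw [PoA]
  by_cases hden : {m : ℕ | ∃ T : SimpleGraph (Fin n), T.IsTree ∧ scMax T = m}.Nonempty
  · have hI : A ≤ sInf {m : ℕ | ∃ T : SimpleGraph (Fin n), T.IsTree ∧ scMax T = m} :=
      le_csInf hden hDen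
    have hS : sSup {m : ℕ | ∃ T : SimpleGraph (Fin n), T.IsTree ∧
        (fun T => MaxEquilibrium T k) T ∧ scMax T = m} ≤ B := csSup_le' hNum
    have hIpos : (0 : ℚ) <
        ((sInf {m : ℕ | ∃ T : SimpleGraph (Fin n), T.IsTree ∧ scMax T = m} : ℕ) : ℚ) := by
      exact_mod_cast lt_of_lt_of_le hA hI
    rw [div_le_div_iff₀ hIpos (by norm_num)]
    have hfin : (sSup {m : ℕ | ∃ T : SimpleGraph (Fin n), T.IsTree ∧
        (fun T => MaxEquilibrium T k) T ∧ scMax T = m}) * 2 ≤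
        3 * sInf {m : ℕ | ∃ T : SimpleGraph (Fin n), T.IsTree ∧ scMax T = m} := by
      omega
    exact_mod_cast hfin
  · rw [Set.not_nonempty_iff_eq_empty.mp hden, Nat.sInf_empty]
    norm_num

end SwapGame
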